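/- Let f be a univalent holomorphic function on 𝔻, Γ₁ a group of Möbius transformations preserving 𝔻, and Γ a group of Möbius transformations of the Riemann sphere such that for every γ ∈ Γ₁ there exists γ̃ ∈ Γ with f ∘ γ = γ̃ ∘ f. Then the kernel K₁(z,w) = (1/π)(1/(z−w)² − f'(z)f'(w)/(f(z)−f(w))²) satisfies K₁(γz, γw)·γ'(z)·γ'(w) = K₁(z,w) for all γ ∈ Γ₁ and z, w ∈ 𝔻 with γz ≠ γw. -/

import Mathlib

set_option maxHeartbeats 1000000

open Metric in
lemma stmt9_key (f : ℂ → ℂ)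
    (hf : DifferentiableOn ℂ f (Metric.ball (0 : ℂ) 1))
    (a b c d at' bt ct dt : ℂ)
    (hdet : a * d - b * c = 1) (hdet' : at' * dt - bt * ct = 1)
    (hden : ∀ z ∈ Metric.ball (0 : ℂ) 1, c * z + d ≠ 0)
    (hpres : ∀ z ∈ Metric.ball (0 : ℂ) 1,
      (a * z + b) / (c * z + d) ∈ Metric.ball (0 : ℂ) 1)
    (hdent : ∀ z ∈ Metric.ball (0 : ℂ) 1, ct * f z + dt ≠ 0)
    (hconj : ∀ z ∈ Metric.ball (0 : ℂ) 1,
      f ((a * z + b) / (c * z + d)) = (at' * f z + bt) / (ct * f z + dt))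
    (z : ℂ) (hz : z ∈ Metric.ball (0 : ℂ) 1) :
    deriv f ((a * z + b) / (c * z + d)) =
      deriv f z * (c * z + d) ^ 2 / (ct * f z + dt) ^ 2 := by
  have hcd := hden z hz
  have hct := hdent z hz
  have hg : HasDerivAt (fun x => (a * x + b) / (c * x + d)) (1 / (c * z + d) ^ 2) z := by
    have h1 : HasDerivAt (fun x => a * x + b) a z := by
      simpa using ((hasDerivAt_id z).const_mul a).add_const b
    have h2 : HasDerivAt (fun x => c * x + d) c z := by
      simpa using ((hasDerivAt_id z).const_mul c).add_const d
    have h3 := h1.div h2 hcd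
    rw [show a * (c * z + d) - (a * z + b) * c = 1 by linear_combination hdet] at h3
    exact h3
  have hfz : DifferentiableAt ℂ f ((a * z + b) / (c * z + d)) :=
    hf.differentiableAt (Metric.isOpen_ball.mem_nhds (hpres z hz))
  have hfz' : DifferentiableAt ℂ f z :=
    hf.differentiableAt (Metric.isOpen_ball.mem_nhds hz)
  have hchain : HasDerivAt (f ∘ fun x => (a * x + b) / (c * x + d))
      (deriv f ((a * z + b) / (c * z + d)) * (1 / (c * z + d) ^ 2)) z :=
    hfz.hasDerivAt.comp z hg
  have heq : (f ∘ fun x => (a * x + b) / (c * x + d)) =ᶠ[nhds z]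
      fun x => (at' * f x + bt) / (ct * f x + dt) := by
    filter_upwards [Metric.isOpen_ball.mem_nhds hz] with x hx
    exact hconj x hx
  have hchain2 : HasDerivAt (fun x => (at' * f x + bt) / (ct * f x + dt))
      (deriv f ((a * z + b) / (c * z + d)) * (1 / (c * z + d) ^ 2)) z :=
    hchain.congr_of_eventuallyEq heq.symm
  have hq : HasDerivAt (fun x => (at' * f x + bt) / (ct * f x + dt))
      (deriv f z / (ct * f z + dt) ^ 2) z := by
    have h1 : HasDerivAt (fun x => at' * f x + bt) (at' * deriv f z) z :=
      (hfz'.hasDerivAt.const_mul at').add_const bt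
    have h2 : HasDerivAt (fun x => ct * f x + dt) (ct * deriv f z) z :=
      (hfz'.hasDerivAt.const_mul ct).add_const dt
    have h3 := h1.div h2 hct
    rw [show at' * deriv f z * (ct * f z + dt) - (at' * f z + bt) * (ct * deriv f z)
        = deriv f z by linear_combination deriv f z * hdet'] at h3
    exact h3
  have := hchain2.unique hq
  rw [mul_one_div, div_eq_div_iff (pow_ne_zero 2 hcd) (pow_ne_zero 2 hct)] at this
  rw [eq_div_iff (pow_ne_zero 2 hct)]
  linear_combination this

theorem stmt9 (f : ℂ → ℂ)
    (hf : DifferentiableOn ℂ f (Metric.ball (0 : ℂ) 1))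
    (hinj : Set.InjOn f (Metric.ball (0 : ℂ) 1))
    (a b c d at' bt ct dt : ℂ)
    (hdet : a * d - b * c = 1) (hdet' : at' * dt - bt * ct = 1)
    (hden : ∀ z ∈ Metric.ball (0 : ℂ) 1, c * z + d ≠ 0)
    (hpres : ∀ z ∈ Metric.ball (0 : ℂ) 1,
      (a * z + b) / (c * z + d) ∈ Metric.ball (0 : ℂ) 1)
    (hdent : ∀ z ∈ Metric.ball (0 : ℂ) 1, ct * f z + dt ≠ 0)
    (hconj : ∀ z ∈ Metric.ball (0 : ℂ) 1,
      f ((a * z + b) / (c * z + d)) = (at' * f z + bt) / (ct * f z + dt)) :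
    ∀ z ∈ Metric.ball (0 : ℂ) 1, ∀ w ∈ Metric.ball (0 : ℂ) 1,
      (a * z + b) / (c * z + d) ≠ (a * w + b) / (c * w + d) →
      ((1 / (Real.pi : ℂ)) *
          (1 / ((a * z + b) / (c * z + d) - (a * w + b) / (c * w + d)) ^ 2 -
            deriv f ((a * z + b) / (c * z + d)) * deriv f ((a * w + b) / (c * w + d)) /
              (f ((a * z + b) / (c * z + d)) - f ((a * w + b) / (c * w + d))) ^ 2)) *
          (1 / (c * z + d) ^ 2) * (1 / (c * w + d) ^ 2) =
        (1 / (Real.pi : ℂ)) *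
          (1 / (z - w) ^ 2 - deriv f z * deriv f w / (f z - f w) ^ 2) := by
  intro z hz w hw hne
  have hcz := hden z hz
  have hcw := hden w hw
  have hctz := hdent z hz
  have hctw := hdent w hw
  have hzw : z ≠ w := by rintro rfl; exact hne rfl
  have hfzw : f z ≠ f w := fun h => hzw (hinj hz hw h)
  have e1 : (a * z + b) / (c * z + d) - (a * w + b) / (c * w + d)
      = (z - w) / ((c * z + d) * (c * w + d)) := by
    rw [div_sub_div _ _ hcz hcw]; congr 1
    linear_combination (z - w) * hdet
  have e2 : (at' * f z + bt) / (ct * f z + dt) - (at' * f w + bt) / (ct * f w + dt)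
      = (f z - f w) / ((ct * f z + dt) * (ct * f w + dt)) := by
    rw [div_sub_div _ _ hctz hctw]; congr 1
    linear_combination (f z - f w) * hdet'
  have e3 := stmt9_key f hf a b c d at' bt ct dt hdet hdet' hden hpres hdent hconj z hz
  have e4 := stmt9_key f hf a b c d at' bt ct dt hdet hdet' hden hpres hdent hconj w hw
  rw [hconj z hz, hconj w hw, e1, e2, e3, e4]
  have hzw' : z - w ≠ 0 := sub_ne_zero.mpr hzw
  have hfzw' : f z - f w ≠ 0 := sub_ne_zero.mpr hfzw
  have hpi : (Real.pi : ℂ) ≠ 0 := Complex.ofReal_ne_zero.mpr Real.pi_ne_zero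
  generalize hcz' : c * z + d = p at *
  generalize hcw' : c * w + d = q at *
  generalize hctz' : ct * f z + dt = r at *
  generalize hctw' : ct * f w + dt = s at *
  generalize hzw2 : z - w = n at *
  generalize hfzw2 : f z - f w = m at *
  generalize deriv f z = u
  generalize deriv f w = v
  have t1 : (1 / (n / (p * q)) ^ 2) * (1 / p ^ 2) * (1 / q ^ 2) = 1 / n ^ 2 := by
    rw [div_pow, one_div_div, mul_pow]
    field_simp
  have t2 : (u * p ^ 2 / r ^ 2 * (v * q ^ 2 / s ^ 2) / (m / (r * s)) ^ 2) *
      (1 / p ^ 2) * (1 / q ^ 2) = u * v / m ^ 2 := by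
    rw [div_pow, mul_pow]
    field_simp
  linear_combination (1 / (Real.pi : ℂ)) * t1 - (1 / (Real.pi : ℂ)) * t2
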